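/- Let b = (1, 0, …, 0, a_n) ∈ ℕ^n with a_n = d − 1 and suppose α_n ≥ d, α_i ≥ 1 for all i. Then the sequence of tuples a^1 = (1,0,…,0,d−1), a^i = e^i + (d−1)e^n for 2 ≤ i ≤ n−1 (shifting the single unit one coordinate to the right at each step), ending at a^n = (0,…,0,d), forms a maximal clique of 𝒢(d,α), and it is the unique maximal clique whose last element equals η = (0,…,0,d) when α_n = d. -/
import Mathlib


/-- The set `V_{n,d}^α` of nonnegative integer tuples with coordinate sum `d`
and coordinatewise bound `α`. -/
def VT (n d : ℕ) (α : Fin n → ℕ) : Set (Fin n → ℕ) :=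
  {c | (∑ i, c i) = d ∧ ∀ i, c i ≤ α i}

/-- `a >_lex b`: the leftmost nonzero entry of `a - b` is positive. -/
def lexGT {n : ℕ} (a b : Fin n → ℕ) : Prop :=
  ∃ i : Fin n, (∀ j, j < i → a j = b j) ∧ b i < a i

/-- `sort(a,b) = (a,b)` for Sturmfels' sorting operator: for every `t`, the prefix
sum of `a` up to `t` equals the ceiling of half the prefix sum of `a + b`. -/
def sortedPair {n : ℕ} (a b : Fin n → ℕ) : Prop :=
  ∀ t : Fin n, 2 * (∑ i ∈ Finset.Iic t, a i)
    = (∑ i ∈ Finset.Iic t, (a i + b i)) + (∑ i ∈ Finset.Iic t, (a i + b i)) % 2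

/-- The sorting signature set `Δ(a,b)` of a sorted pair, recorded (0-indexed) as the
set of positions `t` where the prefix sum of `b` is one less than that of `a`. -/
def sigSet {n : ℕ} (a b : Fin n → ℕ) : Finset (Fin n) :=
  Finset.univ.filter (fun t => (∑ i ∈ Finset.Iic t, b i) + 1 = ∑ i ∈ Finset.Iic t, a i)

/-- Adjacency in the sorting graph `𝒢(d,α)`. -/
def adjG {n : ℕ} (a b : Fin n → ℕ) : Prop :=
  (lexGT a b ∧ sortedPair a b) ∨ (lexGT b a ∧ sortedPair b a)

/-- A clique of the sorting graph `𝒢(d,α)`. -/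
def isClique (n d : ℕ) (α : Fin n → ℕ) (S : Finset (Fin n → ℕ)) : Prop :=
  (↑S ⊆ VT n d α) ∧ ∀ a ∈ S, ∀ b ∈ S, a ≠ b → adjG a b

/-- A maximal clique of the sorting graph `𝒢(d,α)`. -/
def isMaxClique (n d : ℕ) (α : Fin n → ℕ) (S : Finset (Fin n → ℕ)) : Prop :=
  isClique n d α S ∧ ∀ T, isClique n d α T → S ⊆ T → S = T

/-- auxiliary: the tuple family -/
def fseq (n d : ℕ) (i t : Fin n) : ℕ :=
  (if t = i then 1 else 0) + (if t.1 = n - 1 then d - 1 else 0)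

section Aux
variable {n d : ℕ}

lemma Ltop (hn : 1 ≤ n) (s : Fin n) : s ≤ (⟨n-1, by omega⟩ : Fin n) :=
  Fin.le_def.mpr (by simp; omega)

lemma fseq_prefix (hn : 1 ≤ n) (i t : Fin n) :
    (∑ x ∈ Finset.Iic t, fseq n d i x) =
    (if i ≤ t then 1 else 0) + (if t = (⟨n-1, by omega⟩ : Fin n) then d - 1 else 0) := by
  set L : Fin n := ⟨n-1, by omega⟩ with hL
  unfold fseq
  rw [Finset.sum_add_distrib]
  congr 1
  · rw [Finset.sum_ite_eq' (Finset.Iic t) i fun _ => 1]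
    simp
  · have : ∀ x : Fin n, (if x.1 = n - 1 then d - 1 else 0) = (if x = L then d - 1 else 0) := by
      intro x
      apply if_congr _ rfl rfl
      rw [hL, Fin.ext_iff]
    rw [Finset.sum_congr rfl (fun x _ => this x)]
    rw [Finset.sum_ite_eq' (Finset.Iic t) L fun _ => d - 1]
    simp only [Finset.mem_Iic]
    apply if_congr _ rfl rfl
    exact ⟨fun h => le_antisymm (Ltop hn t) h, fun h => h ▸ le_refl L⟩

lemma fseq_sorted (hn : 1 ≤ n) (hd1 : 1 ≤ d) (i j : Fin n) (hij : i ≤ j) :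
    sortedPair (fseq n d i) (fseq n d j) := by
  intro t
  set L : Fin n := ⟨n-1, by omega⟩ with hL
  have hsum : ∑ x ∈ Finset.Iic t, (fseq n d i x + fseq n d j x)
      = (∑ x ∈ Finset.Iic t, fseq n d i x) + ∑ x ∈ Finset.Iic t, fseq n d j x :=
    Finset.sum_add_distrib
  rw [hsum, fseq_prefix hn i t, fseq_prefix hn j t]
  by_cases ht : t = L
  · have hi : i ≤ t := ht ▸ Ltop hn i
    have hj : j ≤ t := ht ▸ Ltop hn j
    rw [if_pos hi, if_pos hj, if_pos ht]
    omega
  · by_cases hj : j ≤ t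
    · have hi : i ≤ t := hij.trans hj
      rw [if_pos hi, if_pos hj, if_neg ht]
    · by_cases hi : i ≤ t
      · rw [if_pos hi, if_neg hj, if_neg ht]
      · rw [if_neg hi, if_neg hj, if_neg ht]

lemma fseq_lex (i j : Fin n) (hij : i < j) : lexGT (fseq n d i) (fseq n d j) := by
  refine ⟨i, fun t ht => ?_, ?_⟩
  · unfold fseq
    rw [if_neg ht.ne, if_neg (ht.trans hij).ne]
  · unfold fseq
    rw [if_pos rfl, if_neg hij.ne]
    omega

lemma fseq_inj (hd1 : 1 ≤ d) : Function.Injective (fseq n d) := by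
  intro i j h
  by_contra hne
  have := congrFun h i
  unfold fseq at this
  rw [if_pos rfl, if_neg (fun hh : i = j => hne hh)] at this
  omega

lemma fseq_sum (hn : 1 ≤ n) (hd1 : 1 ≤ d) (i : Fin n) : ∑ t, fseq n d i t = d := by
  set L : Fin n := ⟨n-1, by omega⟩ with hL
  unfold fseq
  rw [Finset.sum_add_distrib]
  have e1 : ∑ t : Fin n, (if t = i then 1 else 0) = 1 := by simp
  have e2 : ∑ t : Fin n, (if t.1 = n-1 then d-1 else 0) = d-1 := by
    have : ∀ x : Fin n, (if x.1 = n - 1 then d - 1 else 0) = (if x = L then d - 1 else 0) := by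
      intro x
      apply if_congr _ rfl rfl
      rw [hL, Fin.ext_iff]
    rw [Finset.sum_congr rfl (fun x _ => this x)]
    simp
  rw [e1, e2]; omega

lemma fseq_eta (hn : 1 ≤ n) (hd1 : 1 ≤ d) :
    (fun t : Fin n => if t.1 = n - 1 then d else 0) = fseq n d ⟨n-1, by omega⟩ := by
  funext t
  unfold fseq
  by_cases ht : t.1 = n - 1
  · have hteq : t = (⟨n-1, by omega⟩ : Fin n) := Fin.ext ht
    rw [if_pos ht, if_pos ht, if_pos hteq]
    omega
  · have hteq : t ≠ (⟨n-1, by omega⟩ : Fin n) := fun h => ht (by rw [h])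
    rw [if_neg ht, if_neg ht, if_neg hteq]

end Aux


/-- The tuple sequence `a^1 = (1,0,…,0,d-1)`, `a^i = e^i + (d-1)e^n`, …,
`a^n = (0,…,0,d)` forms a maximal clique of `𝒢(d,α)`, and when `α_n = d` it is
the unique maximal clique containing (i.e. ending at) `η = (0,…,0,d)`. -/
theorem stmt18 (n d : ℕ) (hn : 3 ≤ n) (α : Fin n → ℕ)
    (hα1 : ∀ i, 1 ≤ α i) (hmono : Monotone α)
    (hαd : ∀ i, α i ≤ d) (hdα : d < ∑ i, α i)
    (hαn : d ≤ α ⟨n - 1, by omega⟩) :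
    (∀ i j : Fin n, i < j →
      lexGT (fun t : Fin n => (if t = i then 1 else 0) + (if t.1 = n - 1 then d - 1 else 0))
        (fun t : Fin n => (if t = j then 1 else 0) + (if t.1 = n - 1 then d - 1 else 0))) ∧
    isMaxClique n d α
      (Finset.image
        (fun i : Fin n => fun t : Fin n =>
          (if t = i then 1 else 0) + (if t.1 = n - 1 then d - 1 else 0))
        Finset.univ) ∧
    (α ⟨n - 1, by omega⟩ = d → ∀ S : Finset (Fin n → ℕ), isMaxClique n d α S →
      (fun t : Fin n => if t.1 = n - 1 then d else 0) ∈ S →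
      S = Finset.image
        (fun i : Fin n => fun t : Fin n =>
          (if t = i then 1 else 0) + (if t.1 = n - 1 then d - 1 else 0))
        Finset.univ) := by
  have hn1 : 1 ≤ n := by omega
  have hd1 : 1 ≤ d := le_trans (hα1 ⟨0, by omega⟩) (hαd _)
  set L : Fin n := ⟨n-1, by omega⟩ with hL
  show (∀ i j : Fin n, i < j → lexGT (fseq n d i) (fseq n d j)) ∧
    isMaxClique n d α (Finset.image (fseq n d) Finset.univ) ∧
    (α L = d → ∀ S : Finset (Fin n → ℕ), isMaxClique n d α S →
      (fun t : Fin n => if t.1 = n - 1 then d else 0) ∈ S →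
      S = Finset.image (fseq n d) Finset.univ)
  -- membership in VT
  have hVT : ∀ i, fseq n d i ∈ VT n d α := by
    intro i
    refine ⟨fseq_sum hn1 hd1 i, fun t => ?_⟩
    unfold fseq
    by_cases ht : t.1 = n - 1
    · have hteq : t = L := Fin.ext ht
      rw [if_pos ht]
      have h2 : (if t = i then 1 else 0) + (d - 1) ≤ d := by split_ifs <;> omega
      exact h2.trans (hteq ▸ hαn)
    · rw [if_neg ht]
      have := hα1 t
      split_ifs <;> omega
  -- η equals fseq L
  have hη : (fun t : Fin n => if t.1 = n - 1 then d else 0) = fseq n d L :=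
    fseq_eta hn1 hd1
  -- key absorption lemma
  have hkey : ∀ b : Fin n → ℕ, (∑ t, b t) = d → adjG b (fseq n d L) →
      ∃ k, b = fseq n d k := by
    intro b hsum hadj
    have hpreL : ∀ t : Fin n, t ≠ L → (∑ x ∈ Finset.Iic t, fseq n d L x) = 0 := by
      intro t ht
      rw [fseq_prefix hn1]
      have hnot : ¬ L ≤ t := fun h => ht (le_antisymm (Ltop hn1 t) h)
      rw [if_neg hnot, if_neg ht]
    have hSb : ∀ t : Fin n, t ≠ L → (∑ x ∈ Finset.Iic t, b x) ≤ 1 := by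
      intro t ht
      rcases hadj with ⟨_, hs⟩ | ⟨_, hs⟩
      · have h := hs t
        rw [Finset.sum_add_distrib, hpreL t ht] at h
        omega
      · have h := hs t
        rw [Finset.sum_add_distrib, hpreL t ht] at h
        omega
    have hbt : ∀ t : Fin n, t ≠ L → b t ≤ 1 := fun t ht =>
      le_trans (Finset.single_le_sum (f := b) (fun _ _ => Nat.zero_le _)
        (Finset.mem_Iic.mpr (le_refl t))) (hSb t ht)
    have hbtwo : ∀ s t : Fin n, s ≠ t → s ≠ L → t ≠ L → b s + b t ≤ 1 := by
      intro s t hst hsL htL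
      have hm : max s t ≠ L := by
        rcases max_cases s t with ⟨h, _⟩ | ⟨h, _⟩ <;> rw [h] <;> assumption
      have hsub : ({s, t} : Finset (Fin n)) ⊆ Finset.Iic (max s t) := by
        intro x hx
        simp only [Finset.mem_insert, Finset.mem_singleton] at hx
        rcases hx with rfl | rfl <;> simp [le_max_left, le_max_right]
      calc b s + b t = ∑ x ∈ ({s, t} : Finset (Fin n)), b x := (Finset.sum_pair hst).symm
        _ ≤ ∑ x ∈ Finset.Iic (max s t), b x := Finset.sum_le_sum_of_subset hsub
        _ ≤ 1 := hSb _ hm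
    by_cases hex : ∃ j : Fin n, j ≠ L ∧ b j ≠ 0
    · obtain ⟨j, hjL, hj0⟩ := hex
      have hbj : b j = 1 := by have := hbt j hjL; omega
      have hzero : ∀ t, t ≠ j → t ≠ L → b t = 0 := by
        intro t htj htL
        have := hbtwo j t (Ne.symm htj) hjL htL
        omega
      have hbL : b L = d - 1 := by
        have hsub : ∑ x ∈ ({j, L} : Finset (Fin n)), b x = ∑ x : Fin n, b x := by
          apply Finset.sum_subset (Finset.subset_univ _)
          intro x _ hx
          simp only [Finset.mem_insert, Finset.mem_singleton, not_or] at hx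
          exact hzero x hx.1 hx.2
        rw [Finset.sum_pair hjL, hsum] at hsub
        omega
      have hjn : ¬ (j.1 = n - 1) := fun h => hjL (Fin.ext h)
      refine ⟨j, funext fun t => ?_⟩
      unfold fseq
      by_cases htL : t = L
      · have htj : t ≠ j := by rintro rfl; exact hjL htL
        have htn : t.1 = n - 1 := by rw [htL]
        rw [if_neg htj, if_pos htn, htL, hbL]
        omega
      · by_cases htj : t = j
        · subst htj
          rw [if_pos rfl, if_neg hjn, hbj]
        · have htn : ¬ (t.1 = n - 1) := fun h => htL (Fin.ext h)
          rw [if_neg htj, if_neg htn, hzero t htj htL]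
    · push_neg at hex
      have hbL : b L = d := by
        have h1 : ∑ x ∈ ({L} : Finset (Fin n)), b x = ∑ x : Fin n, b x := by
          apply Finset.sum_subset (Finset.subset_univ _)
          intro x _ hx
          simp only [Finset.mem_singleton] at hx
          exact hex x hx
        rw [Finset.sum_singleton, hsum] at h1
        exact h1
      refine ⟨L, funext fun t => ?_⟩
      unfold fseq
      by_cases htL : t = L
      · have htn : t.1 = n - 1 := by rw [htL]
        rw [if_pos htL, if_pos htn, htL, hbL]
        omega
      · have htn : ¬ (t.1 = n - 1) := fun h => htL (Fin.ext h)
        rw [if_neg htL, if_neg htn, hex t htL]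
  -- the clique
  have hfLmem : fseq n d L ∈ Finset.image (fseq n d) Finset.univ :=
    Finset.mem_image_of_mem _ (Finset.mem_univ L)
  have hclique : isClique n d α (Finset.image (fseq n d) Finset.univ) := by
    constructor
    · intro x hx
      simp only [Finset.coe_image, Finset.coe_univ, Set.image_univ, Set.mem_range] at hx
      obtain ⟨i, rfl⟩ := hx
      exact hVT i
    · intro a ha b hb hab
      simp only [Finset.mem_image, Finset.mem_univ, true_and] at ha hb
      obtain ⟨i, rfl⟩ := ha
      obtain ⟨j, rfl⟩ := hb
      rcases lt_trichotomy i j with h | h | h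
      · exact Or.inl ⟨fseq_lex i j h, fseq_sorted hn1 hd1 i j h.le⟩
      · exact absurd (congrArg (fseq n d) h) hab
      · exact Or.inr ⟨fseq_lex j i h, fseq_sorted hn1 hd1 j i h.le⟩
  have hmax : isMaxClique n d α (Finset.image (fseq n d) Finset.univ) := by
    refine ⟨hclique, fun T hT hST => ?_⟩
    refine Finset.Subset.antisymm hST (fun b hb => ?_)
    by_cases hbη : b = fseq n d L
    · rw [hbη]; exact hfLmem
    · have hadj : adjG b (fseq n d L) := hT.2 b hb _ (hST hfLmem) hbη
      obtain ⟨k, rfl⟩ := hkey b (hT.1 hb).1 hadj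
      exact Finset.mem_image_of_mem _ (Finset.mem_univ k)
  refine ⟨fun i j hij => fseq_lex i j hij, hmax, fun _ S hSmax hηS => ?_⟩
  have hηS' : fseq n d L ∈ S := hη ▸ hηS
  have hsub : S ⊆ Finset.image (fseq n d) Finset.univ := by
    intro b hb
    by_cases hbη : b = fseq n d L
    · rw [hbη]; exact hfLmem
    · have hadj : adjG b (fseq n d L) := hSmax.1.2 b hb _ hηS' hbη
      obtain ⟨k, rfl⟩ := hkey b (hSmax.1.1 hb).1 hadj
      exact Finset.mem_image_of_mem _ (Finset.mem_univ k)
  exact hSmax.2 _ hclique hsub
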